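/- arXiv:1911.01322 — 2 statements merged into one kernel-verified Lean document; each statement's English description precedes it below -/
import Mathlib

section
/- Let l ≥ 1 and let M, K, L, a, b, d, e be positive reals with a ≤ e < b and n ≥ 1. Suppose z₁, …, z_l lie on the circle |z| = n^{−a}, and suppose ‖E(z₁)‖ ≤ M n^{d/2}, ‖E(z_l)^{-1}‖ ≤ M n^{d/2}, ‖C(z_i)‖ ≤ K for all i, and ‖E(z_i)^{-1}E(z_{i+1}) ‖ ≤ L n^{e−a} for 1 ≤ i ≤ l−1. Then with F(z) = E(z)C(z)E(z)^{-1}/(n^b z), one has ‖F(z₁)⋯F(z_l)‖ ≤ M² K^l L^{l−1} n^{a+d−e−(b−e)l}. -/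
attribute [local instance] Matrix.linftyOpNormedRing Matrix.linftyOpNormedAlgebra

/-- quantitative product bound. If `z₀, …, z_{l-1}` lie on the circle
`|z| = n^{-a}`, `‖E(z₀)‖ ≤ M n^{d/2}`, `‖Einv(z_{l-1})‖ ≤ M n^{d/2}`, `‖C(zᵢ)‖ ≤ K`,
and `‖Einv(zᵢ) * E(z_{i+1})‖ ≤ L n^{e-a}`, then with
`F(z) = (n^b z)⁻¹ • (E z * C z * Einv z)` one has
`‖F(z₀)⋯F(z_{l-1})‖ ≤ M² K^l L^{l-1} n^{a+d-e-(b-e)l}`. -/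
theorem stmt7 {m : ℕ} (l : ℕ) (hl : 1 ≤ l)
    (M K L a b d e : ℝ) (hM : 0 < M) (hK : 0 < K) (hL : 0 < L)
    (ha : 0 < a) (hae : a ≤ e) (heb : e < b) (hd : 0 < d)
    (n : ℝ) (hn : 1 ≤ n)
    (z : ℕ → ℂ) (hz : ∀ i < l, ‖z i‖ = n ^ (-a))
    (E C Einv : ℂ → Matrix (Fin m) (Fin m) ℂ)
    (hEinv : ∀ w, E w * Einv w = 1) (hEinv' : ∀ w, Einv w * E w = 1)
    (hE0 : ‖E (z 0)‖ ≤ M * n ^ (d / 2))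
    (hEl : ‖Einv (z (l - 1))‖ ≤ M * n ^ (d / 2))
    (hC : ∀ i < l, ‖C (z i)‖ ≤ K)
    (hEE : ∀ i, i + 1 < l → ‖Einv (z i) * E (z (i + 1))‖ ≤ L * n ^ (e - a))
    (F : ℂ → Matrix (Fin m) (Fin m) ℂ)
    (hF : ∀ w, F w = (((n ^ b : ℝ) : ℂ) * w)⁻¹ • (E w * C w * Einv w)) :
    ‖((List.range l).map fun i => F (z i)).prod‖ ≤
      M ^ 2 * K ^ l * L ^ (l - 1) * n ^ (a + d - e - (b - e) * l) := by
  have hn0 : (0:ℝ) < n := lt_of_lt_of_le one_pos hn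
  have hscal : ∀ i < l, ‖(((n ^ b : ℝ) : ℂ) * z i)⁻¹‖ = n ^ (a - b) := by
    intro i hi
    rw [norm_inv, norm_mul, Complex.norm_real, Real.norm_eq_abs,
      abs_of_pos (Real.rpow_pos_of_pos hn0 b)]
    have : ‖z i‖ = n ^ (-a) := hz i hi
    rw [this, ← Real.rpow_add hn0, ← Real.rpow_neg hn0.le]
    congr 1; ring
  set c : ℝ := K * L * n ^ (e - b) with hc
  have key : ∀ j, j < l →
      ‖((List.range j).map fun i => F (z i)).prod * E (z j)‖ ≤
        M * n ^ (d / 2) * c ^ j := by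
    intro j
    induction j with
    | zero => intro _; simpa using hE0
    | succ j ih =>
      intro hj
      have hj' : j < l := Nat.lt_of_succ_lt hj
      rw [List.range_succ, List.map_append, List.prod_append]
      simp only [List.map_cons, List.map_nil, List.prod_cons, List.prod_nil, mul_one]
      rw [hF (z j)]
      set P := ((List.range j).map fun i => F (z i)).prod with hP
      have hrw : P * ((((n ^ b : ℝ) : ℂ) * z j)⁻¹ • (E (z j) * C (z j) * Einv (z j))) *
          E (z (j + 1)) =
          (((n ^ b : ℝ) : ℂ) * z j)⁻¹ •
            (P * E (z j) * C (z j) * (Einv (z j) * E (z (j + 1)))) := by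
        simp [mul_smul_comm, smul_mul_assoc, mul_assoc]
      rw [hrw, norm_smul, hscal j hj']
      have h1 : ‖P * E (z j) * C (z j) * (Einv (z j) * E (z (j + 1)))‖ ≤
          (M * n ^ (d / 2) * c ^ j) * K * (L * n ^ (e - a)) := by
        calc ‖P * E (z j) * C (z j) * (Einv (z j) * E (z (j + 1)))‖
            ≤ ‖P * E (z j) * C (z j)‖ * ‖Einv (z j) * E (z (j + 1))‖ := norm_mul_le _ _
          _ ≤ ‖P * E (z j)‖ * ‖C (z j)‖ * ‖Einv (z j) * E (z (j + 1))‖ := by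
              gcongr; exact norm_mul_le _ _
          _ ≤ (M * n ^ (d / 2) * c ^ j) * K * (L * n ^ (e - a)) := by
              gcongr
              · exact ih hj'
              · exact hC j hj'
              · exact hEE j hj
      calc n ^ (a - b) * ‖P * E (z j) * C (z j) * (Einv (z j) * E (z (j + 1)))‖
          ≤ n ^ (a - b) * ((M * n ^ (d / 2) * c ^ j) * K * (L * n ^ (e - a))) := by
            gcongr
        _ = M * n ^ (d / 2) * c ^ (j + 1) := by
            have hn' : n ^ (a - b) * n ^ (e - a) = n ^ (e - b) := by
              rw [← Real.rpow_add hn0]; congr 1; ring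
            rw [pow_succ, hc, ← hn']; ring
  obtain ⟨k, rfl⟩ : ∃ k, l = k + 1 := ⟨l - 1, (Nat.succ_pred_eq_of_pos hl).symm⟩
  have hkl : k < k + 1 := Nat.lt_succ_self k
  simp only [Nat.add_sub_cancel] at hEl ⊢
  rw [List.range_succ, List.map_append, List.prod_append]
  simp only [List.map_cons, List.map_nil, List.prod_cons, List.prod_nil, mul_one]
  rw [hF (z k)]
  set P := ((List.range k).map fun i => F (z i)).prod with hP
  have hrw : P * ((((n ^ b : ℝ) : ℂ) * z k)⁻¹ • (E (z k) * C (z k) * Einv (z k))) =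
      (((n ^ b : ℝ) : ℂ) * z k)⁻¹ • (P * E (z k) * C (z k) * Einv (z k)) := by
    simp [mul_smul_comm, mul_assoc]
  rw [hrw, norm_smul, hscal k hkl]
  have h1 : ‖P * E (z k) * C (z k) * Einv (z k)‖ ≤
      (M * n ^ (d / 2) * c ^ k) * K * (M * n ^ (d / 2)) := by
    have hEl' : ‖Einv (z k)‖ ≤ M * n ^ (d / 2) := by simpa using hEl
    calc ‖P * E (z k) * C (z k) * Einv (z k)‖
        ≤ ‖P * E (z k) * C (z k)‖ * ‖Einv (z k)‖ := norm_mul_le _ _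
      _ ≤ ‖P * E (z k)‖ * ‖C (z k)‖ * ‖Einv (z k)‖ := by
          gcongr; exact norm_mul_le _ _
      _ ≤ (M * n ^ (d / 2) * c ^ k) * K * (M * n ^ (d / 2)) := by
          gcongr
          · exact key k hkl
          · exact hC k hkl
  have hck : c ^ k = K ^ k * L ^ k * n ^ ((e - b) * k) := by
    rw [hc, mul_pow, mul_pow, Real.rpow_mul hn0.le, Real.rpow_natCast]
  calc n ^ (a - b) * ‖P * E (z k) * C (z k) * Einv (z k)‖
      ≤ n ^ (a - b) * ((M * n ^ (d / 2) * c ^ k) * K * (M * n ^ (d / 2))) := by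
        gcongr
    _ = M ^ 2 * K ^ (k + 1) * L ^ k *
        (n ^ (a - b) * n ^ (d / 2) * n ^ ((e - b) * k) * n ^ (d / 2)) := by
        rw [hck]; ring
    _ = M ^ 2 * K ^ (k + 1) * L ^ k * n ^ (a + d - e - (b - e) * ((k : ℝ) + 1)) := by
        rw [← Real.rpow_add hn0, ← Real.rpow_add hn0, ← Real.rpow_add hn0]
        congr 1
        ring
    _ = M ^ 2 * K ^ (k + 1) * L ^ k * n ^ (a + d - e - (b - e) * (k + 1 : ℕ)) := by
        push_cast
        ring_nf
end

section
/- Let f be a matrix-valued function analytic on an open neighborhood of the closed disc of radius R > 0 centered at 0, and suppose ‖f(s) − f(0)‖ ≤ A + B|s| for all s with |s| = R, where A, B ≥ 0. Then for any 0 < ρ < 1 and all z, w with |z|, |w| ≤ ρR, one has ‖f(w) − f(z)‖ ≤ |z − w| (A/R + B) / (1 − ρ)². -/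
attribute [local instance] Matrix.linftyOpNormedRing Matrix.linftyOpNormedAlgebra

open Metric Real Complex circleIntegral

/-- Let `f` be a matrix-valued function analytic on an open neighborhood of
the closed disc of radius `R > 0` with `‖f s - f 0‖ ≤ A + B|s|` on the circle `|s| = R`.
Then for `0 < ρ < 1` and `|z|, |w| ≤ ρR`,
`‖f w - f z‖ ≤ |z - w| (A/R + B) / (1 - ρ)²`. -/
theorem stmt11 {m : ℕ} (R A B ρ : ℝ) (hR : 0 < R) (hA : 0 ≤ A) (hB : 0 ≤ B)
    (hρ0 : 0 < ρ) (hρ1 : ρ < 1)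
    (f : ℂ → Matrix (Fin m) (Fin m) ℂ)
    (U : Set ℂ) (hU : IsOpen U) (hball : Metric.closedBall 0 R ⊆ U)
    (hf : DifferentiableOn ℂ f U)
    (hbound : ∀ s : ℂ, ‖s‖ = R → ‖f s - f 0‖ ≤ A + B * ‖s‖) :
    ∀ z w : ℂ, ‖z‖ ≤ ρ * R → ‖w‖ ≤ ρ * R →
      ‖f w - f z‖ ≤ ‖z - w‖ * (A / R + B) / (1 - ρ) ^ 2 := by
  intro z w hz hw
  set g : ℂ → Matrix (Fin m) (Fin m) ℂ := fun s => f s - f 0 with hgdef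
  have hρR : ρ * R < R := by nlinarith
  have hz' : z ∈ ball (0 : ℂ) R := by
    simpa [Complex.norm_def] using lt_of_le_of_lt hz hρR
  have hw' : w ∈ ball (0 : ℂ) R := by
    simpa [Complex.norm_def] using lt_of_le_of_lt hw hρR
  have hgdiff : DifferentiableOn ℂ g U := hf.sub (differentiableOn_const _)
  have hgc : DiffContOnCl ℂ g (ball (0 : ℂ) R) := by
    apply DifferentiableOn.diffContOnCl
    apply hgdiff.mono
    rw [closure_ball (0 : ℂ) hR.ne']
    exact hball
  have hiz := hgc.circleIntegral_sub_inv_smul hz'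
  have hiw := hgc.circleIntegral_sub_inv_smul hw'
  -- integrability
  have hcont : ∀ v : ℂ, v ∈ ball (0 : ℂ) R →
      CircleIntegrable (fun s => (s - v)⁻¹ • g s) 0 R := by
    intro v hv
    apply ContinuousOn.circleIntegrable hR.le
    apply ContinuousOn.smul (f := fun s => (s - v)⁻¹) (g := g)
    · apply ContinuousOn.inv₀ (by fun_prop)
      intro s hs
      have : ‖s‖ = R := by simpa [Complex.norm_def] using hs
      intro h0
      have hv' : ‖v‖ < R := by
        simpa [Complex.norm_def] using mem_ball_zero_iff.mp hv
      have hvs : v = s := (sub_eq_zero.mp h0).symm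
      rw [hvs, this] at hv'
      exact lt_irrefl _ hv'
    · apply (hgc.continuousOn_ball).mono
      intro s hs
      have : ‖s‖ = R := by simpa [Complex.norm_def] using hs
      simp [Metric.mem_closedBall, Complex.dist_eq, this]
  have key : ((2 * π * I : ℂ)) • (g w - g z)
      = ∮ s in C(0, R), ((s - w)⁻¹ - (s - z)⁻¹) • g s := by
    rw [smul_sub, ← hiw, ← hiz, ← circleIntegral.integral_sub (hcont w hw') (hcont z hz')]
    congr 1
    ext s
    rw [sub_smul]
  -- bound the integrand
  set C : ℝ := ‖z - w‖ * (A + B * R) / (R * (1 - ρ)) ^ 2 with hC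
  have hbnd : ∀ s ∈ sphere (0 : ℂ) R, ‖((s - w)⁻¹ - (s - z)⁻¹) • g s‖ ≤ C := by
    intro s hs
    have hsR : ‖s‖ = R := by simpa [Complex.norm_def] using hs
    have hsw : R * (1 - ρ) ≤ ‖s - w‖ := by
      have h1 : ‖s‖ - ‖w‖ ≤ ‖s - w‖ := by
        simpa using norm_sub_norm_le s w
      nlinarith
    have hsz : R * (1 - ρ) ≤ ‖s - z‖ := by
      have h1 : ‖s‖ - ‖z‖ ≤ ‖s - z‖ := by
        simpa using norm_sub_norm_le s z
      nlinarith
    have hpos : (0:ℝ) < R * (1 - ρ) := by nlinarith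
    have hswne : s - w ≠ 0 := by
      intro h; rw [h] at hsw; simp at hsw; nlinarith
    have hszne : s - z ≠ 0 := by
      intro h; rw [h] at hsz; simp at hsz; nlinarith
    have hcoef : (s - w)⁻¹ - (s - z)⁻¹ = (w - z) / ((s - w) * (s - z)) := by
      field_simp
      ring
    rw [norm_smul, hcoef]
    have h1 : ‖(w - z) / ((s - w) * (s - z))‖
        = ‖z - w‖ / (‖s - w‖ * ‖s - z‖) := by
      rw [norm_div, norm_mul, norm_sub_rev w z]
    rw [h1]
    have h2 : ‖g s‖ ≤ A + B * R := by
      have := hbound s hsR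
      rwa [hsR] at this
    have h3 : ‖z - w‖ / (‖s - w‖ * ‖s - z‖)
        ≤ ‖z - w‖ / (R * (1 - ρ)) ^ 2 := by
      apply div_le_div_of_nonneg_left (by positivity) (by positivity)
      rw [sq]
      exact mul_le_mul hsw hsz hpos.le (by positivity)
    have h4 : (0:ℝ) ≤ A + B * R := by positivity
    calc ‖z - w‖ / (‖s - w‖ * ‖s - z‖) * ‖g s‖
        ≤ ‖z - w‖ / (R * (1 - ρ)) ^ 2 * (A + B * R) := by
          apply mul_le_mul h3 h2 (norm_nonneg _) (by positivity)
      _ = C := by rw [hC]; ring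
  have hCnn : 0 ≤ C := by positivity
  have hmain : ‖∮ s in C(0, R), ((s - w)⁻¹ - (s - z)⁻¹) • g s‖ ≤ 2 * π * R * C := by
    have := circleIntegral.norm_integral_le_of_norm_le_const (c := (0:ℂ)) hR.le hbnd
    simpa [_root_.abs_of_pos hR] using this
  have hlhs : ‖((2 * π * I : ℂ)) • (g w - g z)‖ = 2 * π * ‖f w - f z‖ := by
    rw [norm_smul]
    have : ‖(2 * π * I : ℂ)‖ = 2 * π := by
      simp [norm_mul, Complex.norm_I, Complex.norm_real,
        _root_.abs_of_nonneg Real.pi_nonneg]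
    rw [this]
    congr 1
    show ‖(f w - f 0) - (f z - f 0)‖ = _
    congr 1
    abel
  have hfin : 2 * π * ‖f w - f z‖ ≤ 2 * π * (R * C) := by
    rw [← hlhs, key]
    calc _ ≤ 2 * π * R * C := hmain
      _ = 2 * π * (R * C) := by ring
  have hπ : (0:ℝ) < 2 * π := by positivity
  have h5 : ‖f w - f z‖ ≤ R * C := le_of_mul_le_mul_left hfin hπ
  have heq : R * C = ‖z - w‖ * (A / R + B) / (1 - ρ) ^ 2 := by
    have hRne : R ≠ 0 := hR.ne'
    have h1ne : (1:ℝ) - ρ ≠ 0 := by intro h; nlinarith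
    rw [hC]
    field_simp
  linarith [heq ▸ h5]
end
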